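/- Suppose the pair (T, G^{(1)}) is pointwise of weak Lie type. Let z ∈ M with d := ord(z) < ∞ and let N ≥ d. Assume in addition that for every N' ≥ 0: if the closure of T^{(1)}(z) contains M_{N'+1+d}, then for every k ≥ 1 the closure of T^{(k)}(z) contains M_{N'+k+d}. If the closure of T^{(1)}(z) contains M_{N+1}, then the closure of the orbit G^{(N+1+d)}z contains {z} + M_{2N+1+d}; in particular z is order-by-order (2N+d)-determined by G^{(N+1+d)}. -/

import Mathlib

variable {𝕜 M : Type*} [CommRing 𝕜] [AddCommGroup M] [Module 𝕜 M]

/-- `End^{(i)}` : the 𝕜-submodule of endomorphisms shifting the filtration by `i`. -/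
def EndS (Mf : ℕ → Submodule 𝕜 M) (i : ℕ) : Submodule 𝕜 (Module.End 𝕜 M) where
  carrier := {φ | ∀ j : ℕ, ∀ x ∈ Mf j, φ x ∈ Mf (j + i)}
  add_mem' := by
    intro a b ha hb j x hx
    simpa [LinearMap.add_apply] using add_mem (ha j x hx) (hb j x hx)
  zero_mem' := by
    intro j x hx
    simpa using (Mf (j + i)).zero_mem
  smul_mem' := by
    intro c a ha j x hx
    simpa [LinearMap.smul_apply] using Submodule.smul_mem _ c (ha j x hx)

/-- `GL^{(i)}` (for `i ≥ 1`): units `u` such that `u` and `u⁻¹` preserve the filtration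
and `u - 1`, `u⁻¹ - 1` lie in `End^{(i)}`. -/
def GLFil (Mf : ℕ → Submodule 𝕜 M) (i : ℕ) : Set (Module.End 𝕜 M)ˣ :=
  {u | (∀ j : ℕ, ∀ x ∈ Mf j, (u : Module.End 𝕜 M) x ∈ Mf j) ∧
    (∀ j : ℕ, ∀ x ∈ Mf j, ((u⁻¹ : (Module.End 𝕜 M)ˣ) : Module.End 𝕜 M) x ∈ Mf j) ∧
    ((u : Module.End 𝕜 M) - 1) ∈ EndS Mf i ∧
    (((u⁻¹ : (Module.End 𝕜 M)ˣ) : Module.End 𝕜 M) - 1) ∈ EndS Mf i}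

/-- `ord(z) = sup {j : z ∈ M_j} ∈ ℕ ∪ {∞}`. -/
noncomputable def ordM (Mf : ℕ → Submodule 𝕜 M) (z : M) : ℕ∞ :=
  ⨆ j ∈ {j : ℕ | z ∈ Mf j}, (j : ℕ∞)

/-- `ord(φ) = sup {i : φ ∈ End^{(i)}} ∈ ℕ ∪ {∞}`. -/
noncomputable def ordE (Mf : ℕ → Submodule 𝕜 M) (φ : Module.End 𝕜 M) : ℕ∞ :=
  ⨆ i ∈ {i : ℕ | φ ∈ EndS Mf i}, (i : ℕ∞)

/-- Closure of a subset in the filtration topology: `X̄ = ⋂_{j≥1} (X + M_j)`. -/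
def clFil (Mf : ℕ → Submodule 𝕜 M) (X : Set M) : Set M :=
  {m | ∀ j : ℕ, 1 ≤ j → ∃ x ∈ X, m - x ∈ Mf j}

/-- `T^{(i)}(z) = {ξ(z) : ξ ∈ T ∩ End^{(i)}}`. -/
def TOrbit (Mf : ℕ → Submodule 𝕜 M) (T : Submodule 𝕜 (Module.End 𝕜 M)) (i : ℕ)
    (z : M) : Set M :=
  {m | ∃ ξ : Module.End 𝕜 M, ξ ∈ T ∧ ξ ∈ EndS Mf i ∧ ξ z = m}

/-- `G^{(i)}z = {u(z) : u ∈ G ∩ GL^{(i)}}`. -/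
def GOrbit (Mf : ℕ → Submodule 𝕜 M) (G : Subgroup (Module.End 𝕜 M)ˣ) (i : ℕ)
    (z : M) : Set M :=
  {m | ∃ u : (Module.End 𝕜 M)ˣ, u ∈ G ∧ u ∈ GLFil Mf i ∧ (u : Module.End 𝕜 M) z = m}

/-- The pair `(T, G)` is pointwise of Lie type for the index `i`. -/
def IsPointwiseLie (Mf : ℕ → Submodule 𝕜 M) (T : Submodule 𝕜 (Module.End 𝕜 M))
    (G : Subgroup (Module.End 𝕜 M)ˣ) (i : ℕ) : Prop :=
  (∀ ξ : Module.End 𝕜 M, ξ ∈ T → ξ ∈ EndS Mf i → ∀ z : M,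
    ∃ u : (Module.End 𝕜 M)ˣ, u ∈ G ∧ u ∈ GLFil Mf i ∧
      (ordM Mf (ξ z) < ⊤ →
        ordM Mf (((u : Module.End 𝕜 M) - 1 - ξ) z) > ordM Mf (ξ z))) ∧
  (∀ u : (Module.End 𝕜 M)ˣ, u ∈ G → u ∈ GLFil Mf i → ∀ z : M,
    ∃ ξ : Module.End 𝕜 M, ξ ∈ T ∧ ξ ∈ EndS Mf i ∧
      (ordM Mf (((u : Module.End 𝕜 M) - 1) z) < ⊤ →
        ordM Mf (((u : Module.End 𝕜 M) - 1 - ξ) z)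
          > ordM Mf (((u : Module.End 𝕜 M) - 1) z)))

/-- The pair `(T, G)` is pointwise of weak Lie type. -/
def IsPointwiseWeakLie (Mf : ℕ → Submodule 𝕜 M) (T : Submodule 𝕜 (Module.End 𝕜 M))
    (G : Subgroup (Module.End 𝕜 M)ˣ) : Prop :=
  ∀ i : ℕ, 1 ≤ i →
    (∀ ξ : Module.End 𝕜 M, ξ ∈ T → ξ ∈ EndS Mf i → ∀ z : M,
      ∃ u : (Module.End 𝕜 M)ˣ, u ∈ G ∧ u ∈ GLFil Mf i ∧
        (ordM Mf (ξ z) < ⊤ →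
          ordM Mf (((u : Module.End 𝕜 M) - 1 - ξ) z)
            ≥ 2 * ordE Mf ξ + ordM Mf z)) ∧
    (∀ u : (Module.End 𝕜 M)ˣ, u ∈ G → u ∈ GLFil Mf i → ∀ z : M,
      ∃ ξ : Module.End 𝕜 M, ξ ∈ T ∧ ξ ∈ EndS Mf i ∧
        (ordM Mf (((u : Module.End 𝕜 M) - 1) z) < ⊤ →
          ordM Mf (((u : Module.End 𝕜 M) - 1 - ξ) z)
            ≥ 2 * ordE Mf ((u : Module.End 𝕜 M) - 1) + ordM Mf z))

lemma mem_of_le_ordM (Mf : ℕ → Submodule 𝕜 M) (hMf0 : Mf 0 = ⊤) (hMf : Antitone Mf)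
    (x : M) (c : ℕ) (h : (c : ℕ∞) ≤ ordM Mf x) : x ∈ Mf c := by
  by_contra hx
  rcases Nat.eq_zero_or_pos c with rfl | hc
  · exact hx (by simp [hMf0])
  have hle : ordM Mf x ≤ ((c - 1 : ℕ) : ℕ∞) := by
    apply iSup₂_le
    intro j hj
    have hjc : j < c := by
      by_contra hjc
      exact hx (hMf (not_lt.mp hjc) hj)
    exact_mod_cast Nat.le_sub_one_of_lt hjc
  have hcc : (c : ℕ∞) ≤ ((c - 1 : ℕ) : ℕ∞) := h.trans hle
  have : c ≤ c - 1 := by exact_mod_cast hcc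
  omega

lemma EndS_antitone (Mf : ℕ → Submodule 𝕜 M) (hMf : Antitone Mf) {i i' : ℕ}
    (h : i ≤ i') : EndS Mf i' ≤ EndS Mf i := by
  intro φ hφ j x hx
  exact hMf (by omega) (hφ j x hx)

lemma GLFil_antitone (Mf : ℕ → Submodule 𝕜 M) (hMf : Antitone Mf) {i i' : ℕ}
    (h : i ≤ i') : GLFil Mf i' ⊆ GLFil Mf i := by
  rintro u ⟨h1, h2, h3, h4⟩
  exact ⟨h1, h2, EndS_antitone Mf hMf h h3, EndS_antitone Mf hMf h h4⟩

lemma one_mem_GLFil (Mf : ℕ → Submodule 𝕜 M) (i : ℕ) :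
    (1 : (Module.End 𝕜 M)ˣ) ∈ GLFil Mf i := by
  refine ⟨fun j x hx => by simpa using hx, fun j x hx => by simpa using hx, ?_, ?_⟩ <;>
    · simpa using (EndS Mf i).zero_mem

lemma mul_mem_GLFil (Mf : ℕ → Submodule 𝕜 M) {i : ℕ} {u v : (Module.End 𝕜 M)ˣ}
    (hu : u ∈ GLFil Mf i) (hv : v ∈ GLFil Mf i) : u * v ∈ GLFil Mf i := by
  obtain ⟨hu1, hu2, hu3, hu4⟩ := hu
  obtain ⟨hv1, hv2, hv3, hv4⟩ := hv
  refine ⟨?_, ?_, ?_, ?_⟩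
  · intro j x hx
    simpa [Units.val_mul, Module.End.mul_apply] using hu1 j _ (hv1 j x hx)
  · intro j x hx
    simpa [mul_inv_rev, Units.val_mul, Module.End.mul_apply] using hv2 j _ (hu2 j x hx)
  · intro j x hx
    have h1 := hu3 j ((v : Module.End 𝕜 M) x) (hv1 j x hx)
    have h2 := hv3 j x hx
    simp only [LinearMap.sub_apply, Module.End.one_apply] at h1 h2 ⊢
    simpa [Units.val_mul, Module.End.mul_apply, sub_add_sub_cancel] using add_mem h1 h2
  · intro j x hx
    have h1 := hv4 j (((u⁻¹ : (Module.End 𝕜 M)ˣ) : Module.End 𝕜 M) x) (hu2 j x hx)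
    have h2 := hu4 j x hx
    simp only [LinearMap.sub_apply, Module.End.one_apply] at h1 h2 ⊢
    simpa [mul_inv_rev, Units.val_mul, Module.End.mul_apply, sub_add_sub_cancel] using
      add_mem h1 h2

lemma le_ordE (Mf : ℕ → Submodule 𝕜 M) {φ : Module.End 𝕜 M} {i : ℕ}
    (h : φ ∈ EndS Mf i) : (i : ℕ∞) ≤ ordE Mf φ :=
  le_iSup₂ (f := fun (j : ℕ) (_ : j ∈ {j : ℕ | φ ∈ EndS Mf j}) => (j : ℕ∞)) i h

/-- suppose `(T, G^{(1)})` is pointwise of weak Lie type, `z` has finite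
order `d`, `N ≥ d`, and the tangent condition propagates along the filtration (if the
closure of `T^{(1)}(z)` contains `M_{N'+1+d}` then for every `k ≥ 1` the closure of
`T^{(k)}(z)` contains `M_{N'+k+d}`). If the closure of `T^{(1)}(z)` contains `M_{N+1}`,
then the closure of the orbit `G^{(N+1+d)}z` contains `{z} + M_{2N+1+d}`; i.e. `z` is
order-by-order `(2N+d)`-determined by `G^{(N+1+d)}`. -/
theorem statement12 (Mf : ℕ → Submodule 𝕜 M) (hMf0 : Mf 0 = ⊤) (hMf : Antitone Mf)
    (G : Subgroup (Module.End 𝕜 M)ˣ)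
    (hG : (G : Set (Module.End 𝕜 M)ˣ) ⊆ GLFil Mf 1)
    (T : Submodule 𝕜 (Module.End 𝕜 M)) (hT : T ≤ EndS Mf 1)
    (hLie : IsPointwiseWeakLie Mf T G)
    (z : M) (d : ℕ) (hz : ordM Mf z = (d : ℕ∞)) (N : ℕ) (hNd : d ≤ N)
    (hprop : ∀ N' : ℕ, (↑(Mf (N' + 1 + d)) ⊆ clFil Mf (TOrbit Mf T 1 z)) →
      ∀ k : ℕ, 1 ≤ k → ↑(Mf (N' + k + d)) ⊆ clFil Mf (TOrbit Mf T k z))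
    (hTz : ↑(Mf (N + 1)) ⊆ clFil Mf (TOrbit Mf T 1 z)) :
    ∀ w ∈ Mf (2 * N + 1 + d), z + w ∈ clFil Mf (GOrbit Mf G (N + 1 + d) z) := by
  intro w hw
  -- z itself lies in Mf d
  have hzd : z ∈ Mf d := mem_of_le_ordM Mf hMf0 hMf z d hz.ge
  -- the tangent closure condition at every level
  have hTk : ∀ k : ℕ, 1 ≤ k → ↑(Mf (N + k)) ⊆ clFil Mf (TOrbit Mf T k z) := by
    intro k hk
    have h1 : N - d + 1 + d = N + 1 := by omega
    have h2 : N - d + k + d = N + k := by omega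
    have := hprop (N - d) (by rw [h1]; exact hTz) k hk
    rwa [h2] at this
  -- main inductive claim
  have main : ∀ n : ℕ, ∃ u : (Module.End 𝕜 M)ˣ, u ∈ G ∧ u ∈ GLFil Mf (N + 1 + d) ∧
      z + w - (u : Module.End 𝕜 M) z ∈ Mf (2 * N + 1 + d + n) := by
    intro n
    induction n with
    | zero =>
      exact ⟨1, one_mem G, one_mem_GLFil Mf _, by simpa using hw⟩
    | succ n ih =>
      obtain ⟨u, huG, huF, hres⟩ := ih
      obtain ⟨hu1, hu2, hu3, hu4⟩ := huF
      set k : ℕ := N + 1 + d + n with hk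
      set m : ℕ := 2 * N + 1 + d + n with hm
      have hmk : m = N + k := by omega
      -- approximate the residue by a tangent vector
      obtain ⟨x, ⟨ξ, hξT, hξE, rfl⟩, hx⟩ :=
        hTk k (by omega) (by rw [← hmk]; exact hres) (m + 1) (by omega)
      -- hx : z + w - u z - ξ z ∈ Mf (m+1)
      rcases eq_top_or_lt_top (ordM Mf (ξ z)) with htop | hlt
      · -- ξ z has infinite order: keep u
        refine ⟨u, huG, ⟨hu1, hu2, hu3, hu4⟩, ?_⟩
        have hξz : ξ z ∈ Mf (m + 1) :=
          mem_of_le_ordM Mf hMf0 hMf _ _ (by rw [htop]; exact le_top)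
        have : (z + w - (u : Module.End 𝕜 M) z - ξ z) + ξ z ∈ Mf (m + 1) :=
          add_mem hx hξz
        exact (by simpa [sub_add_cancel] using this : z + w - (u : Module.End 𝕜 M) z ∈ Mf (m + 1))
      · -- use the weak Lie property
        obtain ⟨g, hgG, hgF, hest⟩ := (hLie k (by omega)).1 ξ hξT hξE z
        have hord := hest hlt
        -- the correction term has high order
        have hrmem : ((g : Module.End 𝕜 M) - 1 - ξ) z ∈ Mf (m + 1) := by
          apply mem_of_le_ordM Mf hMf0 hMf _ _ (le_trans ?_ hord)
          have h1 : (k : ℕ∞) ≤ ordE Mf ξ := le_ordE Mf hξE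
          have h2 : ((m + 1 : ℕ) : ℕ∞) ≤ 2 * (k : ℕ∞) + (d : ℕ∞) := by
            have : ((m + 1 : ℕ) : ℕ∞) ≤ ((2 * k + d : ℕ) : ℕ∞) := by
              exact_mod_cast (by omega : m + 1 ≤ 2 * k + d)
            simpa [Nat.cast_add, Nat.cast_mul] using this
          refine h2.trans ?_
          rw [hz]
          exact add_le_add (mul_le_mul_right h1 2) le_rfl
        refine ⟨u * g, mul_mem huG hgG,
          mul_mem_GLFil Mf ⟨hu1, hu2, hu3, hu4⟩
            (GLFil_antitone Mf hMf (by omega) hgF), ?_⟩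
        have hkey : z + w - ((u * g : (Module.End 𝕜 M)ˣ) : Module.End 𝕜 M) z =
            (z + w - (u : Module.End 𝕜 M) z - ξ z) -
              (((u : Module.End 𝕜 M) - 1) (ξ z)) -
              ((u : Module.End 𝕜 M) (((g : Module.End 𝕜 M) - 1 - ξ) z)) := by
          simp only [Units.val_mul, Module.End.mul_apply, LinearMap.sub_apply,
            Module.End.one_apply, map_sub]
          abel
        rw [hkey]
        -- each piece lies in Mf (m+1)
        have hξz : ξ z ∈ Mf (d + k) := hξE d z hzd
        have ht2 : ((u : Module.End 𝕜 M) - 1) (ξ z) ∈ Mf (m + 1) := by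
          have := hu3 (d + k) (ξ z) hξz
          exact hMf (by omega) this
        have ht3 : (u : Module.End 𝕜 M) (((g : Module.End 𝕜 M) - 1 - ξ) z) ∈ Mf (m + 1) :=
          hu1 (m + 1) _ hrmem
        exact sub_mem (sub_mem hx ht2) ht3
  -- conclude
  intro j hj
  obtain ⟨u, huG, huF, hres⟩ := main j
  refine ⟨(u : Module.End 𝕜 M) z, ⟨u, huG, huF, rfl⟩, ?_⟩
  exact hMf (by omega) hres
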